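/- (Strassen's theorem for finite sets, singleton-constraint corollary) Let A, B be finite sets, P a probability measure on A, P′ a probability measure on B, and δ a real number, with A, B ⊂ ℝ. If P({a}) ≤ 1 − P′({a − δ}) for every a ∈ A, then there exists a coupling P̂ of P and P′ on A × B with P̂({(a,b) : a − b = δ}) = 0. -/

import Mathlib

lemma exists_between_sum (B : Finset ℝ) (lb ub : ℝ → ℝ) (hle : ∀ b, lb b ≤ ub b)
    (c : ℝ) (h1 : ∑ b ∈ B, lb b ≤ c) (h2 : c ≤ ∑ b ∈ B, ub b) :
    ∃ g : ℝ → ℝ, (∀ b, lb b ≤ g b) ∧ (∀ b, g b ≤ ub b) ∧ ∑ b ∈ B, g b = c := by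
  set S := ∑ b ∈ B, lb b with hS
  set T := ∑ b ∈ B, ub b with hT
  set θ : ℝ := (c - S) / (T - S) with hθ
  have hST : S ≤ T := le_trans h1 h2
  have hθ0 : 0 ≤ θ := div_nonneg (by linarith) (by linarith)
  have hθ1 : θ ≤ 1 := by
    rcases eq_or_lt_of_le hST with h | h
    · simp [hθ, ← h]
    · rw [hθ, div_le_one (by linarith)]; linarith
  refine ⟨fun b => lb b + θ * (ub b - lb b), fun b => ?_, fun b => ?_, ?_⟩
  · have := mul_nonneg hθ0 (sub_nonneg.2 (hle b)); simp only []; linarith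
  · have : θ * (ub b - lb b) ≤ 1 * (ub b - lb b) :=
      mul_le_mul_of_nonneg_right hθ1 (sub_nonneg.2 (hle b))
    simp only []; linarith
  · rw [Finset.sum_add_distrib, ← Finset.mul_sum, Finset.sum_sub_distrib]
    rcases eq_or_lt_of_le hST with h | h
    · rw [← hS, ← hT, ← h]; simp; linarith
    · rw [← hS, ← hT, hθ, div_mul_cancel₀ _ (by linarith)]; ring

lemma key_lemma (A : Finset ℝ) : ∀ (B : Finset ℝ) (P P' : ℝ → ℝ) (t δ : ℝ),
    (∀ a, 0 ≤ P a) → (∀ b, 0 ≤ P' b) →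
    (∀ a, a ∉ A → P a = 0) → (∀ b, b ∉ B → P' b = 0) →
    (∑ a ∈ A, P a = t) → (∑ b ∈ B, P' b = t) →
    (∀ a ∈ A, P a + P' (a - δ) ≤ t) →
    ∃ J : ℝ → ℝ → ℝ, (∀ a b, 0 ≤ J a b) ∧
      (∀ a b, a ∉ A ∨ b ∉ B → J a b = 0) ∧
      (∀ a, ∑ b ∈ B, J a b = P a) ∧
      (∀ b, ∑ a ∈ A, J a b = P' b) ∧
      (∀ a b, a - b = δ → J a b = 0) := by
  induction A using Finset.induction_on with
  | empty =>
    intro B P P' t δ hP hP' hPsupp hP'supp hPsum hP'sum hcond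
    have ht : t = 0 := by simpa using hPsum.symm
    have hP'0 : ∀ b, P' b = 0 := by
      intro b
      by_cases hb : b ∈ B
      · exact (Finset.sum_eq_zero_iff_of_nonneg (fun x _ => hP' x)).1
          (by rw [hP'sum, ht]) b hb
      · exact hP'supp b hb
    refine ⟨fun _ _ => 0, fun _ _ => le_refl _, fun _ _ _ => rfl, ?_, ?_, fun _ _ _ => rfl⟩
    · intro a; simp [hPsupp a (Finset.notMem_empty a)]
    · intro b; simp [hP'0 b]
  | @insert a s ha IH =>
    intro B P P' t δ hP hP' hPsupp hP'supp hPsum hP'sum hcond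
    classical
    have hsum' : t = P a + ∑ x ∈ s, P x := by rw [← hPsum, Finset.sum_insert ha]
    have hPa_le : P a ≤ t := by
      have h0 : 0 ≤ ∑ x ∈ s, P x := Finset.sum_nonneg fun x _ => hP x
      linarith
    have htwo : ∀ a' ∈ s, P a' + P a ≤ t := by
      intro a' ha'
      have h1 : P a' ≤ ∑ x ∈ s, P x := Finset.single_le_sum (fun x _ => hP x) ha'
      linarith
    set lb : ℝ → ℝ := fun b =>
      if b ∈ B ∧ b ≠ a - δ ∧ b + δ ∈ s then max 0 (P (b + δ) + P' b + P a - t) else 0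
      with hlbdef
    set ub : ℝ → ℝ := fun b => if b ∈ B ∧ b ≠ a - δ then P' b else 0 with hubdef
    have hlb_nonneg : ∀ b, 0 ≤ lb b := by
      intro b; rw [hlbdef]; dsimp only
      split
      · exact le_max_left _ _
      · exact le_refl _
    have hub_le : ∀ b, ub b ≤ P' b := by
      intro b; rw [hubdef]; dsimp only
      split
      · exact le_refl _
      · exact hP' b
    have hle : ∀ b, lb b ≤ ub b := by
      intro b; rw [hlbdef, hubdef]; dsimp only
      by_cases h : b ∈ B ∧ b ≠ a - δ ∧ b + δ ∈ s
      · rw [if_pos h, if_pos ⟨h.1, h.2.1⟩]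
        refine max_le (hP' b) ?_
        have := htwo (b + δ) h.2.2
        linarith
      · rw [if_neg h]
        by_cases h2 : b ∈ B ∧ b ≠ a - δ
        · rw [if_pos h2]; exact hP' b
        · rw [if_neg h2]
    -- lower bounds sum to at most P a
    have hlb_sum : ∑ b ∈ B, lb b ≤ P a := by
      set T := B.filter (fun b => 0 < lb b) with hT
      have hsumT : ∑ b ∈ B, lb b = ∑ b ∈ T, lb b := by
        rw [hT]
        exact (Finset.sum_filter_of_ne (fun b _ hb =>
          lt_of_le_of_ne (hlb_nonneg b) (Ne.symm hb))).symm
      have hmem : ∀ b ∈ T, (b ∈ B ∧ b ≠ a - δ ∧ b + δ ∈ s) ∧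
          lb b = P (b + δ) + P' b + P a - t := by
        intro b hb
        rw [hT, Finset.mem_filter] at hb
        have hpos := hb.2
        by_cases h : b ∈ B ∧ b ≠ a - δ ∧ b + δ ∈ s
        · refine ⟨h, ?_⟩
          rw [hlbdef] at hpos ⊢; dsimp only at hpos ⊢
          rw [if_pos h] at hpos ⊢
          rcases max_cases 0 (P (b + δ) + P' b + P a - t) with ⟨h1, _⟩ | ⟨h1, _⟩
          · exfalso; rw [h1] at hpos; exact lt_irrefl 0 hpos
          · exact h1
        · exfalso
          rw [hlbdef] at hpos; dsimp only at hpos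
          rw [if_neg h] at hpos; exact lt_irrefl 0 hpos
      have hsplit : ∑ b ∈ T, lb b =
          (∑ b ∈ T, P (b + δ)) + (∑ b ∈ T, P' b) + T.card * (P a - t) := by
        rw [Finset.sum_congr rfl (fun b hb => (hmem b hb).2)]
        rw [Finset.sum_sub_distrib, Finset.sum_add_distrib, Finset.sum_add_distrib,
            Finset.sum_const, Finset.sum_const, nsmul_eq_mul, nsmul_eq_mul]
        ring
      have h1 : ∑ b ∈ T, P (b + δ) ≤ t - P a := by
        have himg : ∑ b ∈ T, P (b + δ) = ∑ c ∈ T.image (· + δ), P c := by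
          rw [Finset.sum_image]
          intro x _ y _ h
          exact add_right_cancel h
        have hsub : T.image (· + δ) ⊆ s := by
          intro c hc
          rw [Finset.mem_image] at hc
          obtain ⟨b, hb, rfl⟩ := hc
          exact ((hmem b hb).1).2.2
        rw [himg]
        have h3 := Finset.sum_le_sum_of_subset_of_nonneg hsub (fun x _ _ => hP x)
        linarith
      have h2 : ∑ b ∈ T, P' b ≤ t := by
        have h3 := Finset.sum_le_sum_of_subset_of_nonneg
          (Finset.filter_subset (fun b => 0 < lb b) B) (fun x _ _ => hP' x)
        rw [← hT] at h3
        linarith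
      rcases Finset.eq_empty_or_nonempty T with hTe | hTne
      · rw [hsumT, hTe, Finset.sum_empty]; exact hP a
      · by_cases hk2 : 2 ≤ T.card
        · have hk2' : (2:ℝ) ≤ (T.card : ℝ) := by exact_mod_cast hk2
          rw [hsumT, hsplit]
          nlinarith [mul_nonneg (by linarith : (0:ℝ) ≤ (T.card:ℝ) - 2)
            (by linarith : (0:ℝ) ≤ t - P a)]
        · have hk1 : T.card = 1 := by
            have := Finset.card_pos.2 hTne
            omega
          obtain ⟨b, hb⟩ := Finset.card_eq_one.1 hk1
          have hbT : b ∈ T := by rw [hb]; exact Finset.mem_singleton_self b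
          obtain ⟨⟨hbB, hbne, hbs⟩, hbval⟩ := hmem b hbT
          have hc := hcond (b + δ) (Finset.mem_insert_of_mem hbs)
          rw [add_sub_cancel_right] at hc
          rw [hsumT, hb, Finset.sum_singleton, hbval]
          linarith
    -- upper bounds sum to at least P a
    have hub_sum : P a ≤ ∑ b ∈ B, ub b := by
      have h1 : ∑ b ∈ B, ub b = ∑ b ∈ B.erase (a - δ), P' b := by
        rw [← Finset.sum_erase B (a := a - δ) (f := ub) (by
          rw [hubdef]; dsimp only
          rw [if_neg (by simp)])]
        refine Finset.sum_congr rfl ?_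
        intro b hb
        rw [Finset.mem_erase] at hb
        rw [hubdef]; dsimp only
        rw [if_pos ⟨hb.2, hb.1⟩]
      have h2 : ∑ b ∈ B.erase (a - δ), P' b = t - P' (a - δ) := by
        by_cases hb : a - δ ∈ B
        · have := Finset.sum_erase_add B P' hb
          linarith
        · rw [Finset.erase_eq_of_notMem hb, hP'sum, hP'supp _ hb]; ring
      have h3 := hcond a (Finset.mem_insert_self a s)
      rw [h1, h2]; linarith
    obtain ⟨g, hg1, hg2, hg3⟩ := exists_between_sum B lb ub hle (P a) hlb_sum hub_sum
    have hg0 : ∀ b, 0 ≤ g b := fun b => le_trans (hlb_nonneg b) (hg1 b)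
    have hgP' : ∀ b, g b ≤ P' b := fun b => le_trans (hg2 b) (hub_le b)
    have hgB : ∀ b, b ∉ B → g b = 0 := by
      intro b hb
      have h1 : ub b = 0 := by
        rw [hubdef]; dsimp only; rw [if_neg (by tauto)]
      have := hg2 b
      exact le_antisymm (by rw [← h1]; exact hg2 b) (hg0 b)
    have hgdiag : g (a - δ) = 0 := by
      have h1 : ub (a - δ) = 0 := by
        rw [hubdef]; dsimp only; rw [if_neg (by simp)]
      exact le_antisymm (by rw [← h1]; exact hg2 _) (hg0 _)
    -- apply induction hypothesis
    obtain ⟨J', hJ'0, hJ'supp, hJ'row, hJ'col, hJ'diag⟩ :=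
      IH B (fun x => if x = a then 0 else P x) (fun b => P' b - g b) (t - P a) δ
        (by intro x; split; exacts [le_refl _, hP x])
        (by intro b; linarith [hgP' b])
        (by intro x hx; split
            · rfl
            · rename_i hxa
              exact hPsupp x (by simp [hxa, hx]))
        (by intro b hb; rw [hP'supp b hb, hgB b hb]; ring)
        (by rw [Finset.sum_congr rfl (fun x hx => if_neg (by rintro rfl; exact ha hx))]
            linarith)
        (by rw [Finset.sum_sub_distrib, hP'sum, hg3])
        (by intro a' ha'
            rw [if_neg (by rintro rfl; exact ha ha')]
            by_cases hb : a' - δ ∈ B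
            · have hcnd : a' - δ ∈ B ∧ a' - δ ≠ a - δ ∧ (a' - δ) + δ ∈ s := by
                refine ⟨hb, ?_, by rw [sub_add_cancel]; exact ha'⟩
                intro h
                apply ha
                have : a' = a := by linarith [sub_left_inj.mp h]
                rw [← this]; exact ha'
              have hlbv : lb (a' - δ) = max 0 (P (a' - δ + δ) + P' (a' - δ) + P a - t) := by
                rw [hlbdef]; dsimp only; rw [if_pos hcnd]
              have h4 := hg1 (a' - δ)
              rw [hlbv, sub_add_cancel] at h4
              have h5 := le_max_right 0 (P a' + P' (a' - δ) + P a - t)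
              linarith [le_trans h5 h4]
            · have h6 := htwo a' ha'
              rw [hP'supp _ hb]
              linarith [hg0 (a' - δ)])
    -- assemble the coupling
    refine ⟨fun x b => if x = a then g b else J' x b, ?_, ?_, ?_, ?_, ?_⟩
    · intro x b; dsimp only; split
      · exact hg0 b
      · exact hJ'0 x b
    · intro x b hx; dsimp only
      split
      · rename_i hxa
        subst hxa
        rcases hx with hx | hx
        · exact absurd (Finset.mem_insert_self x s) hx
        · exact hgB b hx
      · rename_i hxa
        refine hJ'supp x b ?_
        rcases hx with hx | hx
        · exact Or.inl (fun hxs => hx (Finset.mem_insert_of_mem hxs))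
        · exact Or.inr hx
    · intro x; dsimp only
      by_cases hxa : x = a
      · subst hxa
        rw [Finset.sum_congr rfl (fun b _ => if_pos rfl)]
        exact hg3
      · rw [Finset.sum_congr rfl (fun b _ => if_neg hxa)]
        rw [hJ'row x, if_neg hxa]
    · intro b; dsimp only
      rw [Finset.sum_insert ha, if_pos rfl,
          Finset.sum_congr rfl (fun x hx => if_neg (by rintro rfl; exact ha hx)),
          hJ'col b]
      ring
    · intro x b hxb; dsimp only
      split
      · rename_i hxa
        subst hxa
        have : b = x - δ := by linarith
        rw [this]; exact hgdiag
      · exact hJ'diag x b hxb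


/-- Strassen's theorem for finite sets, singleton-constraint corollary: if
`P({a}) ≤ 1 - P'({a - δ})` for every `a ∈ A`, then there is a coupling of `P` and `P'`
putting zero mass on the diagonal `{(a,b) : a - b = δ}`. -/
theorem stmt_16 (A B : Finset ℝ) (P P' : ℝ → ℝ) (δ : ℝ)
    (hP : ∀ a, 0 ≤ P a) (hP' : ∀ b, 0 ≤ P' b)
    (hPsupp : ∀ a, a ∉ A → P a = 0) (hP'supp : ∀ b, b ∉ B → P' b = 0)
    (hPsum : ∑ a ∈ A, P a = 1) (hP'sum : ∑ b ∈ B, P' b = 1)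
    (hcond : ∀ a ∈ A, P a ≤ 1 - P' (a - δ)) :
    ∃ J : ℝ → ℝ → ℝ, (∀ a b, 0 ≤ J a b) ∧
      (∀ a b, a ∉ A ∨ b ∉ B → J a b = 0) ∧
      (∀ a, ∑ b ∈ B, J a b = P a) ∧
      (∀ b, ∑ a ∈ A, J a b = P' b) ∧
      (∀ a b, a - b = δ → J a b = 0) := by
  exact key_lemma A B P P' 1 δ hP hP' hPsupp hP'supp hPsum hP'sum
    (fun a ha => by linarith [hcond a ha])
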